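/- Fix constants m, ω > 0, a positive integer d, and points x₀, p₀ ∈ ℝ^d, and set z = x₀ + i p₀/(mω) ∈ ℂ^d. For r > 0 with r² > x₀², let a(r) = a(x̃₀, p̃₀) ∈ ℂ^{d+1}. Then as r → ∞, the first d components of a(r) converge to z (i.e., lim_{r→∞} a(r)_k = z_k for k = 1, …, d), and the last component satisfies lim_{r→∞} (a(r)_{d+1} − r) = 0. -/

import Mathlib

open Filter Metric

/-- The classical "complexified position" `a(x,p)` for the sphere of radius `r`:
`a(x,p) = cosh(j/(mωr²)) x + i (r²/j) sinh(j/(mωr²)) p` with `j = r|p|`, and `a(x,0) = x`. -/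
noncomputable def aFun {n : ℕ} (m ω r : ℝ) (x p : Fin n → ℝ) : Fin n → ℂ :=
  if p = 0 then fun i => (x i : ℂ)
  else fun i =>
    (↑(Real.cosh (r * Real.sqrt (∑ j, p j ^ 2) / (m * ω * r ^ 2)) * x i) : ℂ) +
      Complex.I *
        (↑((r ^ 2 / (r * Real.sqrt (∑ j, p j ^ 2))) *
            Real.sinh (r * Real.sqrt (∑ j, p j ^ 2) / (m * ω * r ^ 2)) * p i) : ℂ)

/-- The point `x̃ = (x, √(r² − x²))` on the sphere of radius `r`. -/
noncomputable def tildeX {d : ℕ} (r : ℝ) (x : Fin d → ℝ) : Fin (d + 1) → ℝ :=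
  Fin.snoc x (Real.sqrt (r ^ 2 - ∑ i, x i ^ 2))

/-- The tangent vector `p̃ = (p, −(p·x)/√(r² − x²))`. -/
noncomputable def tildeP {d : ℕ} (r : ℝ) (x p : Fin d → ℝ) : Fin (d + 1) → ℝ :=
  Fin.snoc p (-(∑ i, p i * x i) / Real.sqrt (r ^ 2 - ∑ i, x i ^ 2))

/-- `z = x₀ + i p₀ / (mω)`. -/
noncomputable def zOf {d : ℕ} (m ω : ℝ) (x0 p0 : Fin d → ℝ) : Fin d → ℂ :=
  fun i => (x0 i : ℂ) + Complex.I * (p0 i : ℂ) / (m * ω : ℝ)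

/-- As `r → ∞`, the first `d` components of `a(x̃₀, p̃₀)` converge to
`z = x₀ + i p₀/(mω)`, and the last component satisfies `a_{d+1} − r → 0`. -/

private lemma sqrt_tendsto_atTop' : Tendsto Real.sqrt atTop atTop := by
  have h := tendsto_rpow_atTop (by norm_num : (0:ℝ) < 1/2)
  refine Tendsto.congr' ?_ h
  filter_upwards [eventually_ge_atTop 0] with x hx
  rw [← Real.sqrt_eq_rpow]

private lemma sinh_slope : Tendsto (fun t : ℝ => Real.sinh t / t) (nhdsWithin 0 {0}ᶜ) (nhds 1) := by
  have h := hasDerivAt_iff_tendsto_slope.mp (by simpa using Real.hasDerivAt_sinh 0)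
  refine h.congr' ?_
  filter_upwards [self_mem_nhdsWithin] with t ht
  simp [slope_def_field, Real.sinh_zero]

private lemma sinh_div_tendsto {u : ℝ → ℝ} (h : Tendsto u atTop (nhds 0))
    (h' : ∀ᶠ r in atTop, u r ≠ 0) :
    Tendsto (fun r => Real.sinh (u r) / u r) atTop (nhds 1) := by
  exact sinh_slope.comp (tendsto_nhdsWithin_iff.mpr ⟨h, h'⟩)

private lemma sum_snoc_sq {d : ℕ} (p : Fin d → ℝ) (c : ℝ) :
    ∑ j : Fin (d+1), (Fin.snoc p c : Fin (d+1) → ℝ) j ^ 2 = (∑ i, p i ^2) + c^2 := by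
  rw [Fin.sum_univ_castSucc]; simp

private lemma basic_r (c : ℝ) (hc : 0 ≤ c) {r : ℝ} (hr : Real.sqrt c + 1 ≤ r) :
    0 < r ∧ 0 < r^2 - c := by
  have h0 : 0 ≤ Real.sqrt c := Real.sqrt_nonneg c
  have hr0 : 0 < r := by linarith
  have : Real.sqrt c < r := by linarith
  have hc2 : c < r^2 := by
    nlinarith [Real.sq_sqrt hc, Real.sqrt_nonneg c]
  exact ⟨hr0, by linarith⟩

private lemma sq_sub_atTop (c : ℝ) : Tendsto (fun r : ℝ => r^2 - c) atTop atTop := by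
  have := tendsto_pow_atTop (two_ne_zero) (α := ℝ)
  exact tendsto_atTop_add_const_right atTop (-c) this |>.congr (fun r => by ring)

private lemma sqrt_sq_sub_atTop (c : ℝ) :
    Tendsto (fun r : ℝ => Real.sqrt (r^2 - c)) atTop atTop :=
  sqrt_tendsto_atTop'.comp (sq_sub_atTop c)

private lemma h2' (c : ℝ) (hc : 0 ≤ c) :
    Tendsto (fun r : ℝ => Real.sqrt (r^2 - c) - r) atTop (nhds 0) := by
  have hden : Tendsto (fun r : ℝ => Real.sqrt (r^2 - c) + r) atTop atTop :=
    tendsto_atTop_mono (fun r => le_add_of_nonneg_left (Real.sqrt_nonneg _)) tendsto_id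
  have h := Tendsto.div_atTop (tendsto_const_nhds (x := -c)) hden
  refine Tendsto.congr' ?_ h
  filter_upwards [eventually_ge_atTop (Real.sqrt c + 1)] with r hr
  obtain ⟨hr0, hrc⟩ := basic_r c hc hr
  have hs : Real.sqrt (r^2 - c) ^ 2 = r^2 - c := Real.sq_sqrt (le_of_lt hrc)
  have hpos : 0 < Real.sqrt (r^2 - c) + r := by positivity
  rw [div_eq_iff hpos.ne']
  nlinarith [hs]

private lemma h1' (c : ℝ) (hc : 0 ≤ c) :
    Tendsto (fun r : ℝ => Real.sqrt (r^2 - c) / r) atTop (nhds 1) := by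
  have hinner : Tendsto (fun r : ℝ => (r^2 - c)/r^2) atTop (nhds 1) := by
    have hd : Tendsto (fun r : ℝ => c / r^2) atTop (nhds 0) :=
      Tendsto.div_atTop tendsto_const_nhds (tendsto_pow_atTop two_ne_zero)
    have := (tendsto_const_nhds (x := (1:ℝ))).sub hd
    rw [sub_zero] at this
    refine Tendsto.congr' ?_ this
    filter_upwards [eventually_gt_atTop 0] with r hr0
    field_simp
  have hcont := (Real.continuous_sqrt.tendsto 1).comp hinner
  rw [Real.sqrt_one] at hcont
  refine Tendsto.congr' ?_ hcont
  filter_upwards [eventually_ge_atTop (Real.sqrt c + 1)] with r hr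
  obtain ⟨hr0, hrc⟩ := basic_r c hc hr
  simp only [Function.comp]
  rw [Real.sqrt_div hrc.le, Real.sqrt_sq hr0.le]


theorem aFun_large_radius_limit
    (d : ℕ) (hd : 0 < d) (m ω : ℝ) (hm : 0 < m) (hω : 0 < ω) (x0 p0 : Fin d → ℝ) :
    (∀ i : Fin d,
        Tendsto (fun r : ℝ => aFun m ω r (tildeX r x0) (tildeP r x0 p0) i.castSucc)
          atTop (nhds (zOf m ω x0 p0 i))) ∧
    Tendsto (fun r : ℝ => aFun m ω r (tildeX r x0) (tildeP r x0 p0) (Fin.last d) - (r : ℂ))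
      atTop (nhds 0) := by
  have hc : (0:ℝ) ≤ (∑ i, x0 i ^ 2) := Finset.sum_nonneg fun i _ => sq_nonneg _
  by_cases hp : p0 = 0
  · subst hp
    have hP0 : ∀ r : ℝ, tildeP r x0 (0 : Fin d → ℝ) = 0 := by
      intro r
      funext j
      refine Fin.lastCases ?_ ?_ j
      · simp [tildeP]
      · intro i; simp [tildeP]
    constructor
    · intro i
      have hz : Tendsto (fun _ : ℝ => ((x0 i : ℂ))) atTop (nhds (zOf m ω x0 0 i)) := by
        simp only [zOf, Pi.zero_apply, Complex.ofReal_zero, mul_zero, zero_div, add_zero]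
        exact tendsto_const_nhds
      refine Tendsto.congr (fun r => Eq.symm ?_) hz
      simp [aFun, hP0 r, tildeX]
    · have h2 := h2' (∑ i, x0 i ^ 2) hc
      have hC : Tendsto (fun r : ℝ => ((Real.sqrt (r^2 - (∑ i, x0 i ^ 2)) - r : ℝ) : ℂ)) atTop (nhds 0) := by
        exact (Complex.continuous_ofReal.tendsto' 0 0 Complex.ofReal_zero).comp h2
      refine Tendsto.congr (fun r => ?_) hC
      simp only [aFun, hP0 r, if_pos, tildeX, Fin.snoc_last]
      push_cast
      ring
  · -- p0 ≠ 0
    have hP2 : (0:ℝ) < (∑ i, p0 i ^ 2) := by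
      obtain ⟨i, hi⟩ := Function.ne_iff.mp hp
      exact Finset.sum_pos' (fun j _ => sq_nonneg _)
        ⟨i, Finset.mem_univ i, pow_two_pos_of_ne_zero (by simpa using hi)⟩
    have hPne : ∀ r : ℝ, tildeP r x0 p0 ≠ 0 := by
      intro r h
      apply hp
      funext i
      have := congrFun h i.castSucc
      simpa [tildeP] using this
    have hS : Tendsto (fun r : ℝ => ((∑ i, p0 i ^ 2) + (∑ i, p0 i * x0 i) ^ 2 / (r ^ 2 - (∑ i, x0 i ^ 2)))) atTop (nhds (∑ i, p0 i ^ 2)) := by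
      have hq0 : Tendsto (fun r : ℝ => (∑ i, p0 i * x0 i) ^ 2 / (r ^ 2 - (∑ i, x0 i ^ 2))) atTop (nhds 0) :=
        Tendsto.div_atTop tendsto_const_nhds (sq_sub_atTop (∑ i, x0 i ^ 2))
      simpa using (tendsto_const_nhds (x := (∑ i, p0 i ^ 2))).add hq0
    have hsqS : Tendsto (fun r : ℝ => Real.sqrt ((∑ i, p0 i ^ 2) + (∑ i, p0 i * x0 i) ^ 2 / (r ^ 2 - (∑ i, x0 i ^ 2)))) atTop (nhds (Real.sqrt (∑ i, p0 i ^ 2))) :=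
      (Real.continuous_sqrt.tendsto _).comp hS
    have ht0 : Tendsto (fun r : ℝ => (Real.sqrt ((∑ i, p0 i ^ 2) + (∑ i, p0 i * x0 i) ^ 2 / (r ^ 2 - (∑ i, x0 i ^ 2))) / (m * ω * r))) atTop (nhds 0) :=
      Tendsto.div_atTop hsqS (Tendsto.const_mul_atTop (mul_pos hm hω) tendsto_id)
    have hSpos : ∀ r : ℝ, Real.sqrt (∑ i, x0 i ^ 2) + 1 ≤ r → 0 < ((∑ i, p0 i ^ 2) + (∑ i, p0 i * x0 i) ^ 2 / (r ^ 2 - (∑ i, x0 i ^ 2))) := by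
      intro r hr
      obtain ⟨hr0, hrc⟩ := basic_r (∑ i, x0 i ^ 2) hc hr
      have h1 : (0:ℝ) ≤ (∑ i, p0 i * x0 i) ^ 2 / (r ^ 2 - (∑ i, x0 i ^ 2)) := div_nonneg (sq_nonneg _) hrc.le
      linarith
    have htpos : ∀ r : ℝ, Real.sqrt (∑ i, x0 i ^ 2) + 1 ≤ r → 0 < (Real.sqrt ((∑ i, p0 i ^ 2) + (∑ i, p0 i * x0 i) ^ 2 / (r ^ 2 - (∑ i, x0 i ^ 2))) / (m * ω * r)) := by
      intro r hr
      obtain ⟨hr0, hrc⟩ := basic_r (∑ i, x0 i ^ 2) hc hr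
      exact div_pos (Real.sqrt_pos.mpr (hSpos r hr)) (by positivity)
    have htne : ∀ᶠ r in atTop, ((Real.sqrt ((∑ i, p0 i ^ 2) + (∑ i, p0 i * x0 i) ^ 2 / (r ^ 2 - (∑ i, x0 i ^ 2))) / (m * ω * r)) : ℝ) ≠ 0 := by
      filter_upwards [eventually_ge_atTop (Real.sqrt (∑ i, x0 i ^ 2) + 1)] with r hr
      exact (htpos r hr).ne'
    have hsum : ∀ r : ℝ, Real.sqrt (∑ i, x0 i ^ 2) + 1 ≤ r →
        (∑ j, tildeP r x0 p0 j ^ 2) = ((∑ i, p0 i ^ 2) + (∑ i, p0 i * x0 i) ^ 2 / (r ^ 2 - (∑ i, x0 i ^ 2))) := by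
      intro r hr
      obtain ⟨hr0, hrc⟩ := basic_r (∑ i, x0 i ^ 2) hc hr
      rw [tildeP, sum_snoc_sq, div_pow, Real.sq_sqrt hrc.le, neg_sq]
    have hcosh : Tendsto (fun r : ℝ => Real.cosh (Real.sqrt ((∑ i, p0 i ^ 2) + (∑ i, p0 i * x0 i) ^ 2 / (r ^ 2 - (∑ i, x0 i ^ 2))) / (m * ω * r))) atTop (nhds 1) := by
      have := (Real.continuous_cosh.tendsto 0).comp ht0
      simpa [Function.comp_def] using this
    have hsdt := sinh_div_tendsto ht0 htne
    have hcoef : Tendsto (fun r : ℝ => Real.sinh (Real.sqrt ((∑ i, p0 i ^ 2) + (∑ i, p0 i * x0 i) ^ 2 / (r ^ 2 - (∑ i, x0 i ^ 2))) / (m * ω * r)) / (m * ω * (Real.sqrt ((∑ i, p0 i ^ 2) + (∑ i, p0 i * x0 i) ^ 2 / (r ^ 2 - (∑ i, x0 i ^ 2))) / (m * ω * r)))) atTop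
        (nhds (1 / (m * ω))) := by
      have h := hsdt.div_const (m * ω)
      refine Tendsto.congr (fun r => ?_) h
      ring
    have hargA : ∀ r : ℝ, Real.sqrt (∑ i, x0 i ^ 2) + 1 ≤ r →
        r * Real.sqrt ((∑ i, p0 i ^ 2) + (∑ i, p0 i * x0 i) ^ 2 / (r ^ 2 - (∑ i, x0 i ^ 2))) / (m * ω * r ^ 2) = (Real.sqrt ((∑ i, p0 i ^ 2) + (∑ i, p0 i * x0 i) ^ 2 / (r ^ 2 - (∑ i, x0 i ^ 2))) / (m * ω * r)) := by
      intro r hr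
      obtain ⟨hr0, hrc⟩ := basic_r (∑ i, x0 i ^ 2) hc hr
      field_simp
    have hcoefA : ∀ r : ℝ, Real.sqrt (∑ i, x0 i ^ 2) + 1 ≤ r →
        r ^ 2 / (r * Real.sqrt ((∑ i, p0 i ^ 2) + (∑ i, p0 i * x0 i) ^ 2 / (r ^ 2 - (∑ i, x0 i ^ 2)))) * Real.sinh (Real.sqrt ((∑ i, p0 i ^ 2) + (∑ i, p0 i * x0 i) ^ 2 / (r ^ 2 - (∑ i, x0 i ^ 2))) / (m * ω * r))
          = Real.sinh (Real.sqrt ((∑ i, p0 i ^ 2) + (∑ i, p0 i * x0 i) ^ 2 / (r ^ 2 - (∑ i, x0 i ^ 2))) / (m * ω * r)) / (m * ω * (Real.sqrt ((∑ i, p0 i ^ 2) + (∑ i, p0 i * x0 i) ^ 2 / (r ^ 2 - (∑ i, x0 i ^ 2))) / (m * ω * r))) := by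
      intro r hr
      obtain ⟨hr0, hrc⟩ := basic_r (∑ i, x0 i ^ 2) hc hr
      have hsq : Real.sqrt ((∑ i, p0 i ^ 2) + (∑ i, p0 i * x0 i) ^ 2 / (r ^ 2 - (∑ i, x0 i ^ 2))) ≠ 0 := (Real.sqrt_pos.mpr (hSpos r hr)).ne'
      field_simp
    constructor
    · intro i
      have hx : Tendsto (fun r : ℝ => ((Real.cosh (Real.sqrt ((∑ i, p0 i ^ 2) + (∑ i, p0 i * x0 i) ^ 2 / (r ^ 2 - (∑ i, x0 i ^ 2))) / (m * ω * r)) * x0 i : ℝ) : ℂ)) atTop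
          (nhds ((1 * x0 i : ℝ) : ℂ)) :=
        (Complex.continuous_ofReal.tendsto _).comp (hcosh.mul_const (x0 i))
      have hpp : Tendsto (fun r : ℝ =>
            ((Real.sinh (Real.sqrt ((∑ i, p0 i ^ 2) + (∑ i, p0 i * x0 i) ^ 2 / (r ^ 2 - (∑ i, x0 i ^ 2))) / (m * ω * r)) / (m * ω * (Real.sqrt ((∑ i, p0 i ^ 2) + (∑ i, p0 i * x0 i) ^ 2 / (r ^ 2 - (∑ i, x0 i ^ 2))) / (m * ω * r))) * p0 i : ℝ) : ℂ)) atTop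
          (nhds ((1 / (m * ω) * p0 i : ℝ) : ℂ)) :=
        (Complex.continuous_ofReal.tendsto _).comp (hcoef.mul_const (p0 i))
      have hlim := hx.add ((tendsto_const_nhds (x := Complex.I)).mul hpp)
      have hval : ((1 * x0 i : ℝ) : ℂ) + Complex.I * ((1 / (m * ω) * p0 i : ℝ) : ℂ)
          = zOf m ω x0 p0 i := by
        rw [zOf]
        push_cast
        have hm' : (m : ℂ) ≠ 0 := Complex.ofReal_ne_zero.mpr hm.ne'
        have hω' : (ω : ℂ) ≠ 0 := Complex.ofReal_ne_zero.mpr hω.ne'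
        field_simp
      rw [← hval]
      refine Tendsto.congr' ?_ hlim
      filter_upwards [eventually_ge_atTop (Real.sqrt (∑ i, x0 i ^ 2) + 1)] with r hr
      unfold aFun
      rw [if_neg (hPne r)]
      simp only [hsum r hr]
      simp only [tildeX, tildeP, Fin.snoc_castSucc]
      rw [hargA r hr, hcoefA r hr]
    · have him0 : Tendsto (fun r : ℝ => -(∑ i, p0 i * x0 i) / Real.sqrt (r ^ 2 - (∑ i, x0 i ^ 2))) atTop (nhds 0) :=
        Tendsto.div_atTop tendsto_const_nhds (sqrt_sq_sub_atTop (∑ i, x0 i ^ 2))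
      have him : Tendsto (fun r : ℝ =>
          Real.sinh (Real.sqrt ((∑ i, p0 i ^ 2) + (∑ i, p0 i * x0 i) ^ 2 / (r ^ 2 - (∑ i, x0 i ^ 2))) / (m * ω * r)) / (m * ω * (Real.sqrt ((∑ i, p0 i ^ 2) + (∑ i, p0 i * x0 i) ^ 2 / (r ^ 2 - (∑ i, x0 i ^ 2))) / (m * ω * r))) * (-(∑ i, p0 i * x0 i) / Real.sqrt (r ^ 2 - (∑ i, x0 i ^ 2)))) atTop
          (nhds 0) := by
        simpa using hcoef.mul him0
      have h3 : Tendsto (fun r : ℝ => r * (Real.sqrt ((∑ i, p0 i ^ 2) + (∑ i, p0 i * x0 i) ^ 2 / (r ^ 2 - (∑ i, x0 i ^ 2))) / (m * ω * r)) ^ 2) atTop (nhds 0) := by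
        have h := Tendsto.div_atTop hS
          (Tendsto.const_mul_atTop (show (0:ℝ) < m ^ 2 * ω ^ 2 by positivity) tendsto_id)
        refine Tendsto.congr' ?_ h
        filter_upwards [eventually_ge_atTop (Real.sqrt (∑ i, x0 i ^ 2) + 1)] with r hr
        obtain ⟨hr0, hrc⟩ := basic_r (∑ i, x0 i ^ 2) hc hr
        rw [div_pow, Real.sq_sqrt (hSpos r hr).le]
        field_simp
        ring
        exact mul_inv_cancel₀ hr0.ne'
      have hhalf : Tendsto (fun r : ℝ => Real.sinh ((Real.sqrt ((∑ i, p0 i ^ 2) + (∑ i, p0 i * x0 i) ^ 2 / (r ^ 2 - (∑ i, x0 i ^ 2))) / (m * ω * r)) / 2) / ((Real.sqrt ((∑ i, p0 i ^ 2) + (∑ i, p0 i * x0 i) ^ 2 / (r ^ 2 - (∑ i, x0 i ^ 2))) / (m * ω * r)) / 2)) atTop (nhds 1) := by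
        refine sinh_div_tendsto ?_ ?_
        · simpa using ht0.div_const 2
        · filter_upwards [eventually_ge_atTop (Real.sqrt (∑ i, x0 i ^ 2) + 1)] with r hr
          exact (div_pos (htpos r hr) two_pos).ne'
      have h1 := h1' (∑ i, x0 i ^ 2) hc
      have h2 := h2' (∑ i, x0 i ^ 2) hc
      have hGre : Tendsto (fun r : ℝ =>
          Real.cosh (Real.sqrt ((∑ i, p0 i ^ 2) + (∑ i, p0 i * x0 i) ^ 2 / (r ^ 2 - (∑ i, x0 i ^ 2))) / (m * ω * r)) * Real.sqrt (r ^ 2 - (∑ i, x0 i ^ 2)) - r) atTop (nhds 0) := by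
        have hpiece : Tendsto (fun r : ℝ =>
            (1/2) * (Real.sinh ((Real.sqrt ((∑ i, p0 i ^ 2) + (∑ i, p0 i * x0 i) ^ 2 / (r ^ 2 - (∑ i, x0 i ^ 2))) / (m * ω * r)) / 2) / ((Real.sqrt ((∑ i, p0 i ^ 2) + (∑ i, p0 i * x0 i) ^ 2 / (r ^ 2 - (∑ i, x0 i ^ 2))) / (m * ω * r)) / 2)) ^ 2
              * (Real.sqrt (r ^ 2 - (∑ i, x0 i ^ 2)) / r) * (r * (Real.sqrt ((∑ i, p0 i ^ 2) + (∑ i, p0 i * x0 i) ^ 2 / (r ^ 2 - (∑ i, x0 i ^ 2))) / (m * ω * r)) ^ 2)) atTop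
            (nhds ((1/2) * 1 ^ 2 * 1 * 0)) :=
          (((hhalf.pow 2).const_mul (1/2)).mul h1).mul h3
        have hcomb := h2.add hpiece
        norm_num at hcomb
        refine Tendsto.congr' ?_ hcomb
        filter_upwards [eventually_ge_atTop (Real.sqrt (∑ i, x0 i ^ 2) + 1)] with r hr
        obtain ⟨hr0, hrc⟩ := basic_r (∑ i, x0 i ^ 2) hc hr
        have hT := htpos r hr
        have hsq : Real.sqrt ((∑ i, p0 i ^ 2) + (∑ i, p0 i * x0 i) ^ 2 / (r ^ 2 - (∑ i, x0 i ^ 2))) ≠ 0 := (Real.sqrt_pos.mpr (hSpos r hr)).ne'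
        have h2v : Real.cosh (Real.sqrt ((∑ i, p0 i ^ 2) + (∑ i, p0 i * x0 i) ^ 2 / (r ^ 2 - (∑ i, x0 i ^ 2))) / (m * ω * r)) = 2 * Real.sinh ((Real.sqrt ((∑ i, p0 i ^ 2) + (∑ i, p0 i * x0 i) ^ 2 / (r ^ 2 - (∑ i, x0 i ^ 2))) / (m * ω * r)) / 2) ^ 2 + 1 := by
          have hv := Real.cosh_two_mul ((Real.sqrt ((∑ i, p0 i ^ 2) + (∑ i, p0 i * x0 i) ^ 2 / (r ^ 2 - (∑ i, x0 i ^ 2))) / (m * ω * r)) / 2)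
          rw [show 2 * ((Real.sqrt ((∑ i, p0 i ^ 2) + (∑ i, p0 i * x0 i) ^ 2 / (r ^ 2 - (∑ i, x0 i ^ 2))) / (m * ω * r)) / 2) = (Real.sqrt ((∑ i, p0 i ^ 2) + (∑ i, p0 i * x0 i) ^ 2 / (r ^ 2 - (∑ i, x0 i ^ 2))) / (m * ω * r)) from by ring] at hv
          rw [hv, Real.cosh_sq]
          ring
        rw [h2v]
        field_simp
        ring
      have hre : Tendsto (fun r : ℝ =>
          ((Real.cosh (Real.sqrt ((∑ i, p0 i ^ 2) + (∑ i, p0 i * x0 i) ^ 2 / (r ^ 2 - (∑ i, x0 i ^ 2))) / (m * ω * r)) * Real.sqrt (r ^ 2 - (∑ i, x0 i ^ 2)) - r : ℝ) : ℂ)) atTop (nhds 0) := by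
        exact (Complex.continuous_ofReal.tendsto' 0 0 Complex.ofReal_zero).comp hGre
      have himC : Tendsto (fun r : ℝ => Complex.I *
          ((Real.sinh (Real.sqrt ((∑ i, p0 i ^ 2) + (∑ i, p0 i * x0 i) ^ 2 / (r ^ 2 - (∑ i, x0 i ^ 2))) / (m * ω * r)) / (m * ω * (Real.sqrt ((∑ i, p0 i ^ 2) + (∑ i, p0 i * x0 i) ^ 2 / (r ^ 2 - (∑ i, x0 i ^ 2))) / (m * ω * r))) * (-(∑ i, p0 i * x0 i) / Real.sqrt (r ^ 2 - (∑ i, x0 i ^ 2))) : ℝ) : ℂ))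
          atTop (nhds 0) := by
        have h' := (Complex.continuous_ofReal.tendsto' 0 0 Complex.ofReal_zero).comp him
        have h2' := h'.const_mul Complex.I
        rw [mul_zero] at h2'
        exact h2'
      have hfinal := hre.add himC
      rw [add_zero] at hfinal
      refine Tendsto.congr' ?_ hfinal
      filter_upwards [eventually_ge_atTop (Real.sqrt (∑ i, x0 i ^ 2) + 1)] with r hr
      unfold aFun
      rw [if_neg (hPne r)]
      simp only [hsum r hr]
      simp only [tildeX, tildeP, Fin.snoc_last]
      rw [hargA r hr, hcoefA r hr]
      push_cast
      ring
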